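/- Let F be a field, G a finite cyclic group of order n = ℓm, H ≤ G a subgroup of order m, and f = Σ_{h ∈ H} h ∈ F[G]. Let F_mat = ρ(f) be the matrix associated to f in the regular right representation ρ of G. Then the characteristic polynomial of F_mat is z^{n−ℓ}(z − m·1_F)^ℓ, where m·1_F is the image of the integer m in F. In particular, if char F divides m, the characteristic polynomial is z^n, while rank F_mat = ℓ. -/

import Mathlib

set_option synthInstance.maxHeartbeats 1000000
set_option maxHeartbeats 1000000

open Polynomial Matrix

/-- The representation of the group algebra `F[G]` induced by the regular right
representation of `G`: the matrix of `g ∈ G` has `(i,j)` entry `1` if `i * g = j`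
and `0` otherwise, extended `F`-linearly. -/
def rho (F : Type*) [Field F] {G : Type*} [Group G] [Fintype G] [DecidableEq G]
    (f : MonoidAlgebra F G) : Matrix G G F :=
  ∑ g : G, f.coeff g • Matrix.of (fun i j => if i * g = j then (1 : F) else 0)

lemma charpoly_allOnes (F : Type*) [Field F] (ι : Type*) [Fintype ι] [DecidableEq ι]
    [Nonempty ι] :
    (Matrix.of (fun _ _ : ι => (1:F))).charpoly
      = X ^ (Fintype.card ι - 1) * (X - C (Fintype.card ι : F)) := by
  obtain ⟨k, hk⟩ : ∃ k, Fintype.card ι = k + 1 :=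
    ⟨Fintype.card ι - 1, (Nat.succ_pred_eq_of_pos Fintype.card_pos).symm⟩
  apply RatFunc.algebraMap_injective F
  set φ := algebraMap F[X] (RatFunc F)
  set t : RatFunc F := RatFunc.X with ht
  have htne : t ≠ 0 := RatFunc.X_ne_zero
  have h1 : φ ((Matrix.of (fun _ _ : ι => (1:F))).charpoly)
      = ((charmatrix (Matrix.of (fun _ _ : ι => (1:F)))).map φ).det := by
    rw [Matrix.charpoly, RingHom.map_det, RingHom.mapMatrix_apply]
  rw [h1]
  have h2 : (charmatrix (Matrix.of (fun _ _ : ι => (1:F)))).map φ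
      = t • ((1 : Matrix ι ι (RatFunc F))
          + Matrix.replicateCol Unit (fun _ => -t⁻¹) * Matrix.replicateRow Unit (fun _ => (1 : RatFunc F))) := by
    ext i j
    by_cases h : i = j <;>
      · simp [h, charmatrix_apply, Matrix.map_apply, Matrix.mul_apply, Matrix.one_apply,
          diagonal_apply, φ, RatFunc.algebraMap_X, ← ht, sub_eq_add_neg]
        field_simp
  rw [h2, Matrix.det_smul, Matrix.det_one_add_replicateCol_mul_replicateRow]
  have h3 : (fun _ : ι => (1 : RatFunc F)) ⬝ᵥ (fun _ => -t⁻¹)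
      = -(Fintype.card ι : RatFunc F) * t⁻¹ := by
    simp [dotProduct, Finset.sum_const, nsmul_eq_mul]
  rw [h3]
  have hC : φ (C ((Fintype.card ι : F))) = (Fintype.card ι : RatFunc F) := by
    rw [RatFunc.algebraMap_C]; exact map_natCast _ _
  have hX : φ X = t := RatFunc.algebraMap_X
  rw [hk] at hC
  simp only [_root_.map_mul, map_pow, _root_.map_sub, hX, hC, hk, Nat.add_sub_cancel]
  field_simp
  ring

lemma charmatrix_blockDiagonal' {R : Type*} [CommRing R] {o n : Type*} [Fintype o] [DecidableEq o]
    [Fintype n] [DecidableEq n] (M : o → Matrix n n R) :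
    charmatrix (Matrix.blockDiagonal M) = Matrix.blockDiagonal (fun k => charmatrix (M k)) := by
  ext ⟨i, k⟩ ⟨j, k'⟩
  by_cases h : k = k'
  · subst h
    by_cases hij : i = j <;>
      simp [hij, charmatrix_apply, Matrix.blockDiagonal_apply, Matrix.diagonal_apply,
        Prod.ext_iff]
  · simp [charmatrix_apply, Matrix.blockDiagonal_apply, Matrix.diagonal_apply, Prod.ext_iff, h]

lemma charpoly_blockDiagonal' {R : Type*} [CommRing R] {o n : Type*} [Fintype o] [DecidableEq o]
    [Fintype n] [DecidableEq n] (M : o → Matrix n n R) :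
    (Matrix.blockDiagonal M).charpoly = ∏ k, (M k).charpoly := by
  rw [Matrix.charpoly, charmatrix_blockDiagonal', Matrix.det_blockDiagonal]
  rfl

lemma rank_cosetIndicator {G : Type*} [Group G] [Fintype G] [DecidableEq G]
    {F : Type*} [Field F] (H : Subgroup G) [DecidablePred (· ∈ H)] :
    (Matrix.of (fun i j : G => if i⁻¹ * j ∈ H then (1:F) else 0)).rank
      = Nat.card (G ⧸ H) := by
  classical
  set v : (G ⧸ H) → (G → F) := fun q i => if QuotientGroup.mk i = q then 1 else 0 with hv
  have hcol : ∀ j : G, (fun i : G => if i⁻¹ * j ∈ H then (1:F) else 0)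
      = v (QuotientGroup.mk j) := by
    intro j; funext i
    simp only [hv, QuotientGroup.eq]
  have hrange : Set.range (Matrix.of (fun i j : G => if i⁻¹ * j ∈ H then (1:F) else 0))ᵀ
      = Set.range v := by
    ext w
    constructor
    · rintro ⟨j, rfl⟩
      exact ⟨QuotientGroup.mk j, by funext i; simpa using (congrFun (hcol j) i).symm⟩
    · rintro ⟨q, rfl⟩
      refine ⟨q.out, ?_⟩
      funext i
      have : QuotientGroup.mk q.out = q := Quotient.out_eq' q
      simpa [this] using congrFun (hcol q.out) i
  have hli : LinearIndependent F v := by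
    rw [Fintype.linearIndependent_iff]
    intro c hc q
    have := congrFun hc q.out
    simpa [hv, Finset.sum_apply, Quotient.out_eq' q, Finset.sum_ite_eq'] using this
  rw [Matrix.rank_eq_finrank_span_cols, Matrix.col, hrange, finrank_span_eq_card hli,
    Nat.card_eq_fintype_card]

/-- The equivalence `H × (G ⧸ H) ≃ G` sending `(h, q)` to `q.out * h`. -/
noncomputable def cosetProdEquiv {G : Type*} [Group G] (H : Subgroup G) :
    H × (G ⧸ H) ≃ G where
  toFun p := (Quotient.out p.2 : G) * (p.1 : G)
  invFun g := (⟨(Quotient.out (QuotientGroup.mk g : G ⧸ H) : G)⁻¹ * g,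
      (QuotientGroup.eq).mp (Quotient.out_eq' (QuotientGroup.mk g : G ⧸ H))⟩,
    QuotientGroup.mk g)
  left_inv := by
    rintro ⟨h, q⟩
    have hq : (QuotientGroup.mk ((Quotient.out q : G) * (h : G)) : G ⧸ H) = q := by
      rw [QuotientGroup.mk_mul_of_mem _ h.2]
      exact Quotient.out_eq' q
    ext
    · simp [hq]
    · simp [hq]
  right_inv := fun g => by simp

/-- Let `G` be a finite cyclic group of order `n = ℓ·m`, `H ≤ G` a
subgroup of order `m`, `f = Σ_{h ∈ H} h ∈ F[G]`, and `F_mat = ρ(f)`. Then the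
characteristic polynomial of `F_mat` is `z^(n-ℓ) (z - m·1_F)^ℓ`. In particular, if
`char F` divides `m`, the characteristic polynomial is `z^n`, while `rank F_mat = ℓ`. -/
theorem charpoly_of_subgroup_sum
    {G : Type*} [Group G] [IsCyclic G] [Fintype G] [DecidableEq G] {F : Type*} [Field F]
    (H : Subgroup G) [Fintype H] (ℓ m : ℕ)
    (hm : Fintype.card H = m) (hn : Fintype.card G = ℓ * m)
    (f : MonoidAlgebra F G) (hf : f = ∑ h : H, MonoidAlgebra.of F G (h : G)) :
    (rho F f).charpoly
        = Polynomial.X ^ (Fintype.card G - ℓ)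
          * (Polynomial.X - Polynomial.C ((m : F))) ^ ℓ ∧
    ((ringChar F ∣ m) → (rho F f).charpoly = Polynomial.X ^ (Fintype.card G)) ∧
    (rho F f).rank = ℓ := by
  classical
  have hmpos : 0 < m := hm ▸ Fintype.card_pos
  -- Step 1 : identify the matrix
  have hM : rho F f = Matrix.of (fun i j : G => if i⁻¹ * j ∈ H then (1:F) else 0) := by
    have hfval : ∀ x : G, f.coeff x = if x ∈ H then (1:F) else 0 := by
      intro x
      rw [hf]
      rw [MonoidAlgebra.coeff_sum, Finsupp.finset_sum_apply]
      by_cases hx : x ∈ H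
      · rw [Finset.sum_eq_single (⟨x, hx⟩ : H)]
        · simp [MonoidAlgebra.of_apply, MonoidAlgebra.coeff_single_apply, hx]
        · intro h _ hne
          have : (h : G) ≠ x := by
            intro e; exact hne (Subtype.ext e)
          simp [MonoidAlgebra.of_apply, MonoidAlgebra.coeff_single_apply, this]
        · intro habs; exact absurd (Finset.mem_univ _) habs
      · rw [Finset.sum_eq_zero, if_neg hx]
        intro h _
        have : (h : G) ≠ x := fun e => hx (e ▸ h.2)
        simp [MonoidAlgebra.of_apply, MonoidAlgebra.coeff_single_apply, this]
    ext i j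
    simp only [rho, Matrix.sum_apply, Matrix.smul_apply, Matrix.of_apply, smul_eq_mul,
      mul_ite, mul_one, mul_zero]
    have hcond : ∀ g : G, (i * g = j) ↔ (g = i⁻¹ * j) := by
      intro g; constructor
      · intro h; rw [← h]; group
      · intro h; rw [h]; group
    rw [Finset.sum_congr rfl (fun g _ => by rw [if_congr (hcond g) rfl rfl]),
      Finset.sum_ite_eq' Finset.univ (i⁻¹ * j) (fun g => f.coeff g), if_pos (Finset.mem_univ _)]
    rw [hfval]
  -- Step 2 : reindex to a block diagonal matrix
  set Q := G ⧸ H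
  set J : Matrix H H F := Matrix.of (fun _ _ : H => (1:F)) with hJ
  set D : Matrix (H × Q) (H × Q) F := Matrix.blockDiagonal (fun _ : Q => J) with hD
  set e : H × Q ≃ G := cosetProdEquiv H with he
  have hMD : Matrix.of (fun i j : G => if i⁻¹ * j ∈ H then (1:F) else 0)
      = Matrix.reindex e e D := by
    ext i j
    rw [Matrix.reindex_apply, Matrix.submatrix_apply, hD, Matrix.blockDiagonal_apply]
    have h2i : (e.symm i).2 = QuotientGroup.mk i := rfl
    have h2j : (e.symm j).2 = QuotientGroup.mk j := rfl
    by_cases h : i⁻¹ * j ∈ H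
    · have hq : (QuotientGroup.mk i : Q) = QuotientGroup.mk j := (QuotientGroup.eq).mpr h
      simp [h, h2i, h2j, hq, hJ]
    · have hq : (QuotientGroup.mk i : Q) ≠ QuotientGroup.mk j := by
        intro hcon; exact h ((QuotientGroup.eq).mp hcon)
      simp [h, h2i, h2j, hq]
  -- cardinality of the quotient
  have hQcard : Fintype.card Q = ℓ := by
    have hcard := Subgroup.card_eq_card_quotient_mul_card_subgroup H
    simp only [Nat.card_eq_fintype_card, hm, hn] at hcard
    exact Nat.eq_of_mul_eq_mul_right hmpos hcard.symm
  -- charpoly of the block diagonal matrix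
  have hJchar : J.charpoly = X ^ (m - 1) * (X - C (m : F)) := by
    have : Nonempty H := ⟨1⟩
    rw [hJ, charpoly_allOnes, hm]
  have hchar : (rho F f).charpoly = X ^ (Fintype.card G - ℓ) * (X - C (m : F)) ^ ℓ := by
    rw [hM, hMD, Matrix.charpoly_reindex, hD, charpoly_blockDiagonal']
    rw [Finset.prod_const, hJchar, Finset.card_univ, hQcard, mul_pow, ← pow_mul]
    congr 2
    rw [Nat.sub_mul, one_mul, mul_comm m ℓ, ← hn]
  refine ⟨hchar, ?_, ?_⟩
  · intro hdvd
    have hm0 : (m : F) = 0 := (ringChar.spec F m).mpr hdvd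
    have hle : ℓ ≤ Fintype.card G := by
      rw [hn]; exact Nat.le_mul_of_pos_right ℓ hmpos
    rw [hchar, hm0, map_zero, sub_zero, ← pow_add, Nat.sub_add_cancel hle]
  · rw [hM, rank_cosetIndicator, Nat.card_eq_fintype_card, hQcard]
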